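/- arXiv:2601.11114 — 3 statements merged into one kernel-verified Lean document; each statement's English description precedes it below -/
import Mathlib

section
/- For every integer d ≥ 2 there exist 2d+1 pairwise non-proportional nonzero vectors P₁,…,P_{2d+1} ∈ ℂ³ and a nonzero vector B ∈ ℂ³ such that the only homogeneous polynomial F ∈ ℂ[x₀,x₁,x₂] of degree d satisfying F(Pᵢ) = 0 for all i and vanishing to order at least d−1 at B is the zero polynomial. -/
open MvPolynomial

/-- Iterated partial derivative of `F` with respect to the multi-index `α`:
`∂₀^{α 0} ∂₁^{α 1} ∂₂^{α 2} F`. -/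
noncomputable def pd (α : Fin 3 → ℕ) (F : MvPolynomial (Fin 3) ℂ) : MvPolynomial (Fin 3) ℂ :=
  (fun G : MvPolynomial (Fin 3) ℂ => pderiv (0 : Fin 3) G)^[α 0]
    ((fun G : MvPolynomial (Fin 3) ℂ => pderiv (1 : Fin 3) G)^[α 1]
      ((fun G : MvPolynomial (Fin 3) ℂ => pderiv (2 : Fin 3) G)^[α 2] F))

/-- `F` vanishes to order at least `m` at `B`: every iterated partial derivative of `F`
of total order at most `m - 1` vanishes at `B`. -/
def ordGe (m : ℕ) (B : Fin 3 → ℂ) (F : MvPolynomial (Fin 3) ℂ) : Prop :=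
  ∀ α : Fin 3 → ℕ, α 0 + α 1 + α 2 < m → MvPolynomial.eval B (pd α F) = 0

/-! ### Auxiliary lemmas -/

section Aux

open Finset

lemma prod_desc_self (n : ℕ) : (∏ t ∈ Finset.range n, ((n:ℂ) - t)) = n.factorial := by
  have h : (∏ t ∈ Finset.range n, ((n:ℂ) - t)) = ∏ t ∈ Finset.range n, ((n - t : ℕ) : ℂ) := by
    apply Finset.prod_congr rfl
    intro t ht
    rw [Nat.cast_sub (le_of_lt (Finset.mem_range.mp ht))]
  rw [h, ← Nat.cast_prod]
  congr 1
  rw [← Finset.prod_range_reflect]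
  have : ∀ j ∈ Finset.range n, n - (n - 1 - j) = j + 1 := by
    intro j hj
    rw [Finset.mem_range] at hj
    omega
  rw [Finset.prod_congr rfl this]
  exact Finset.prod_range_add_one_eq_factorial n

lemma prod_desc_zero {k n : ℕ} (h : k < n) : (∏ t ∈ Finset.range n, ((k:ℂ) - t)) = 0 := by
  apply Finset.prod_eq_zero (Finset.mem_range.mpr h)
  simp

lemma iter_pderiv_monomial (i : Fin 3) (n : ℕ) (m : Fin 3 →₀ ℕ) (c : ℂ) :
    (fun G : MvPolynomial (Fin 3) ℂ => pderiv i G)^[n] (monomial m c) =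
      monomial (m - Finsupp.single i n) (c * ∏ t ∈ Finset.range n, ((m i : ℂ) - t)) := by
  induction n with
  | zero => simp
  | succ n ih =>
    rw [Function.iterate_succ_apply', ih, pderiv_monomial]
    have hexp : m - Finsupp.single i n - Finsupp.single i 1 = m - Finsupp.single i (n + 1) := by
      rw [tsub_tsub, ← Finsupp.single_add]
    have hval : (m - Finsupp.single i n) i = m i - n := by
      simp [Finsupp.tsub_apply]
    rw [hexp, hval]
    congr 1
    rw [Finset.prod_range_succ, mul_assoc]
    congr 1
    rcases le_or_gt n (m i) with h | h
    · rw [Nat.cast_sub h]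
    · rw [Nat.sub_eq_zero_of_le h.le, Nat.cast_zero]
      rw [Finset.prod_eq_zero (Finset.mem_range.mpr h) (by simp)]
      simp

/-- The special point `B = (0, 0, 1)`. -/
def e2 : Fin 3 → ℂ := fun i => if i = 2 then 1 else 0

lemma eval_e2_monomial (s : Fin 3 →₀ ℕ) (c : ℂ) :
    MvPolynomial.eval e2 (monomial s c) = if s 0 = 0 ∧ s 1 = 0 then c else 0 := by
  rw [eval_monomial]
  rw [Finsupp.prod_fintype _ _ (by intro i; simp)]
  rw [Fin.prod_univ_three]
  simp only [e2]
  norm_num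
  rw [zero_pow_eq, zero_pow_eq]
  rcases eq_or_ne (s 0) 0 with h0 | h0 <;> rcases eq_or_ne (s 1) 0 with h1 | h1 <;>
    simp [h0, h1]

lemma eval_pd_monomial (a b : ℕ) (m : Fin 3 →₀ ℕ) (c : ℂ) :
    MvPolynomial.eval e2 (pd ![a, b, 0] (monomial m c)) =
      if m 0 = a ∧ m 1 = b then (a.factorial * b.factorial : ℂ) * c else 0 := by
  unfold pd
  simp only [Matrix.cons_val_zero, Matrix.cons_val_one, Matrix.head_cons, Matrix.cons_val_two,
    Matrix.tail_cons]
  rw [Function.iterate_zero_apply, iter_pderiv_monomial, iter_pderiv_monomial, eval_e2_monomial]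
  have h0 : (m - Finsupp.single (1 : Fin 3) b) 0 = m 0 := by simp [Finsupp.tsub_apply]
  have e0 : (m - Finsupp.single (1 : Fin 3) b - Finsupp.single (0 : Fin 3) a) 0 = m 0 - a := by
    simp [Finsupp.tsub_apply]
  have e1 : (m - Finsupp.single (1 : Fin 3) b - Finsupp.single (0 : Fin 3) a) 1 = m 1 - b := by
    simp [Finsupp.tsub_apply]
  rw [h0, e0, e1]
  rcases lt_trichotomy (m 0) a with h | h | h
  · rw [prod_desc_zero h]
    simp only [mul_zero, ite_self]
    rw [if_neg (by omega)]
  · rcases lt_trichotomy (m 1) b with h' | h' | h'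
    · rw [prod_desc_zero h']
      simp only [mul_zero, zero_mul]
      simp only [ite_self]
      rw [if_neg (by omega)]
    · rw [h, h', prod_desc_self, prod_desc_self, if_pos (by omega), if_pos ⟨rfl, rfl⟩]
      ring
    · rw [if_neg (by omega), if_neg (by omega)]
  · rw [if_neg (by omega), if_neg (by omega)]

lemma deg3 (m : Fin 3 →₀ ℕ) : m.degree = m 0 + m 1 + m 2 := by
  rw [Finsupp.degree_apply, Finset.sum_subset (Finset.subset_univ _)
    (fun i _ hi => Finsupp.notMem_support_iff.mp hi), Fin.sum_univ_three]

lemma iter_pderiv_sum (i : Fin 3) (n : ℕ) {ι : Type*} (s : Finset ι)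
    (f : ι → MvPolynomial (Fin 3) ℂ) :
    (fun G : MvPolynomial (Fin 3) ℂ => pderiv i G)^[n] (∑ x ∈ s, f x) =
      ∑ x ∈ s, (fun G : MvPolynomial (Fin 3) ℂ => pderiv i G)^[n] (f x) := by
  induction n with
  | zero => simp
  | succ n ih =>
    rw [Function.iterate_succ_apply', ih, map_sum]
    exact Finset.sum_congr rfl fun x _ => (Function.iterate_succ_apply' _ n (f x)).symm

lemma pd_sum (α : Fin 3 → ℕ) {ι : Type*} (s : Finset ι) (f : ι → MvPolynomial (Fin 3) ℂ) :
    pd α (∑ x ∈ s, f x) = ∑ x ∈ s, pd α (f x) := by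
  unfold pd
  rw [iter_pderiv_sum, iter_pderiv_sum, iter_pderiv_sum]

lemma coeff_eq_zero_of_ordGe {d : ℕ} {F : MvPolynomial (Fin 3) ℂ} (hF : F.IsHomogeneous d)
    (hord : ordGe (d - 1) e2 F) (m : Fin 3 →₀ ℕ) (hm : m 0 + m 1 < d - 1) :
    coeff m F = 0 := by
  by_contra hc
  have hmem : m ∈ F.support := by rwa [MvPolynomial.mem_support_iff]
  have hα : (![m 0, m 1, 0] : Fin 3 → ℕ) 0 + ![m 0, m 1, 0] 1 + ![m 0, m 1, 0] 2 < d - 1 := by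
    simpa using hm
  have h := hord ![m 0, m 1, 0] hα
  rw [MvPolynomial.as_sum F, pd_sum, map_sum] at h
  have hsum : ∀ m' ∈ F.support, m' ≠ m →
      MvPolynomial.eval e2 (pd ![m 0, m 1, 0] (monomial m' (coeff m' F))) = 0 := by
    intro m' hm' hne
    rw [eval_pd_monomial]
    rw [if_neg]
    rintro ⟨h0, h1⟩
    apply hne
    have hd' : m'.degree = d := by
      rw [Finsupp.degree_eq_weight_one]
      exact hF (MvPolynomial.mem_support_iff.mp hm')
    have hd : m.degree = d := by
      rw [Finsupp.degree_eq_weight_one]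
      exact hF hc
    rw [deg3] at hd hd'
    ext i
    fin_cases i
    · exact h0
    · exact h1
    · show m' 2 = m 2
      omega
  rw [Finset.sum_eq_single_of_mem m hmem hsum, eval_pd_monomial, if_pos ⟨rfl, rfl⟩] at h
  have hne : ((m 0).factorial * (m 1).factorial : ℂ) ≠ 0 := by
    rw [← Nat.cast_mul]
    exact_mod_cast Nat.cast_ne_zero.mpr
      (Nat.mul_ne_zero (Nat.factorial_ne_zero _) (Nat.factorial_ne_zero _))
  have h' := (mul_eq_zero.mp h).resolve_left (by
    rw [← Nat.cast_mul] at hne ⊢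
    exact hne)
  exact hc h'

/-- Exponent of the monomial `x₀^(d-j) x₁^j`. -/
noncomputable def μ0 (d j : ℕ) : Fin 3 →₀ ℕ :=
  Finsupp.single 0 (d - j) + Finsupp.single 1 j

/-- Exponent of the monomial `x₀^(d-1-j) x₁^j x₂`. -/
noncomputable def μ1 (d j : ℕ) : Fin 3 →₀ ℕ :=
  Finsupp.single 0 (d - 1 - j) + Finsupp.single 1 j + Finsupp.single 2 1

lemma μ0_apply (d j : ℕ) : μ0 d j 0 = d - j ∧ μ0 d j 1 = j ∧ μ0 d j 2 = 0 := by
  refine ⟨?_, ?_, ?_⟩ <;> simp [μ0, Finsupp.single_apply]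

lemma μ1_apply (d j : ℕ) : μ1 d j 0 = d - 1 - j ∧ μ1 d j 1 = j ∧ μ1 d j 2 = 1 := by
  refine ⟨?_, ?_, ?_⟩ <;> simp [μ1, Finsupp.single_apply]

lemma coeff_sum_CX {n : ℕ} (c : ℕ → ℂ) {j : ℕ} (hj : j < n) :
    (∑ k ∈ Finset.range n, Polynomial.C (c k) * Polynomial.X ^ k).coeff j = c j := by
  rw [Polynomial.finset_sum_coeff]
  rw [Finset.sum_eq_single_of_mem j (Finset.mem_range.mpr hj)]
  · simp
  · intro k _ hk
    simp [Polynomial.coeff_C_mul, Polynomial.coeff_X_pow, hk.symm]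

lemma support_subset_of_coeffs {d : ℕ} {F : MvPolynomial (Fin 3) ℂ} (hF : F.IsHomogeneous d)
    (hlow : ∀ m : Fin 3 →₀ ℕ, m 0 + m 1 < d - 1 → coeff m F = 0) :
    F.support ⊆ (Finset.range (d + 1)).image (μ0 d) ∪ (Finset.range d).image (μ1 d) := by
  intro m hm
  have hc : coeff m F ≠ 0 := MvPolynomial.mem_support_iff.mp hm
  have hdeg : m 0 + m 1 + m 2 = d := by
    have := hF hc
    rw [← deg3, Finsupp.degree_eq_weight_one]
    exact this
  have hge : ¬ (m 0 + m 1 < d - 1) := fun h => hc (hlow m h)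
  have hm2 : m 2 ≤ 1 := by omega
  rw [Finset.mem_union]
  interval_cases h2 : m 2
  · left
    rw [Finset.mem_image]
    refine ⟨m 1, Finset.mem_range.mpr (by omega), ?_⟩
    ext i
    fin_cases i
    · show μ0 d (m 1) 0 = m 0
      rw [(μ0_apply d (m 1)).1]; omega
    · exact (μ0_apply d (m 1)).2.1
    · show μ0 d (m 1) 2 = m 2
      rw [(μ0_apply d (m 1)).2.2]; exact h2.symm
  · right
    rw [Finset.mem_image]
    refine ⟨m 1, Finset.mem_range.mpr (by omega), ?_⟩
    ext i
    fin_cases i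
    · show μ1 d (m 1) 0 = m 0
      rw [(μ1_apply d (m 1)).1]; omega
    · exact (μ1_apply d (m 1)).2.1
    · show μ1 d (m 1) 2 = m 2
      rw [(μ1_apply d (m 1)).2.2]; exact h2.symm

lemma eval_point {d : ℕ} {F : MvPolynomial (Fin 3) ℂ} (hF : F.IsHomogeneous d)
    (hlow : ∀ m : Fin 3 →₀ ℕ, m 0 + m 1 < d - 1 → coeff m F = 0) (t z : ℂ) :
    MvPolynomial.eval ![1, t, z] F =
      (∑ j ∈ Finset.range (d + 1), coeff (μ0 d j) F * t ^ j)
        + z * ∑ j ∈ Finset.range d, coeff (μ1 d j) F * t ^ j := by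
  rw [eval_eq' ![1, t, z] F]
  rw [Finset.sum_subset (support_subset_of_coeffs hF hlow)
    (fun m _ hm => by rw [MvPolynomial.notMem_support_iff.mp hm, zero_mul])]
  have hdisj : Disjoint ((Finset.range (d + 1)).image (μ0 d))
      ((Finset.range d).image (μ1 d)) := by
    rw [Finset.disjoint_left]
    intro m hm0 hm1
    rw [Finset.mem_image] at hm0 hm1
    obtain ⟨a, _, ha⟩ := hm0
    obtain ⟨b, _, hb⟩ := hm1
    have h0 : m 2 = 0 := by rw [← ha]; exact (μ0_apply d a).2.2
    have h1 : m 2 = 1 := by rw [← hb]; exact (μ1_apply d b).2.2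
    omega
  rw [Finset.sum_union hdisj]
  rw [Finset.sum_image (fun a _ b _ h => by
    have : μ0 d a 1 = μ0 d b 1 := by rw [h]
    rwa [(μ0_apply d a).2.1, (μ0_apply d b).2.1] at this)]
  rw [Finset.sum_image (fun a _ b _ h => by
    have : μ1 d a 1 = μ1 d b 1 := by rw [h]
    rwa [(μ1_apply d a).2.1, (μ1_apply d b).2.1] at this)]
  rw [Finset.mul_sum]
  congr 1
  · apply Finset.sum_congr rfl
    intro j _
    rw [Fin.prod_univ_three]
    obtain ⟨h0, h1, h2⟩ := μ0_apply d j
    rw [h0, h1, h2]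
    simp
  · apply Finset.sum_congr rfl
    intro j _
    rw [Fin.prod_univ_three]
    obtain ⟨h0, h1, h2⟩ := μ1_apply d j
    rw [h0, h1, h2]
    simp
    ring

end Aux

/-- For every `d ≥ 2` there exist `2d + 1` pairwise non-proportional nonzero vectors in `ℂ³`
and a nonzero vector `B` such that the only homogeneous polynomial of degree `d` vanishing
at all the points and to order at least `d - 1` at `B` is the zero polynomial. -/
theorem exists_general_points_trivial_system (d : ℕ) (hd : 2 ≤ d) :
    ∃ P : Fin (2 * d + 1) → (Fin 3 → ℂ),
      (∀ i, P i ≠ 0) ∧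
      (∀ i j, i ≠ j → ∀ c : ℂ, P i ≠ c • P j) ∧
      ∃ B : Fin 3 → ℂ, B ≠ 0 ∧
        ∀ F : MvPolynomial (Fin 3) ℂ, F.IsHomogeneous d →
          (∀ i, MvPolynomial.eval (P i) F = 0) → ordGe (d - 1) B F → F = 0 := by
  classical
  refine ⟨fun i => if (i : ℕ) < d + 1 then ![1, ((i : ℕ) : ℂ), 0]
    else ![1, (((i : ℕ) - (d + 1) : ℕ) : ℂ), 1], ?_, ?_, ?_⟩
  · intro i h
    dsimp only at h
    by_cases hi : (i : ℕ) < d + 1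
    · rw [if_pos hi] at h
      have := congrFun h 0
      simp at this
    · rw [if_neg hi] at h
      have := congrFun h 0
      simp at this
  · intro i j hne c h
    dsimp only at h
    have h0 := congrFun h 0
    have h1 := congrFun h 1
    have h2 := congrFun h 2
    by_cases hi : (i : ℕ) < d + 1 <;> by_cases hj : (j : ℕ) < d + 1
    · rw [if_pos hi, if_pos hj] at h0 h1
      simp [Pi.smul_apply] at h0 h1
      apply hne
      apply Fin.ext
      have hcast : ((i : ℕ) : ℂ) = ((j : ℕ) : ℂ) := h1.trans (by rw [← h0, one_mul])
      exact_mod_cast hcast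
    · rw [if_pos hi, if_neg hj] at h0 h2
      simp [Pi.smul_apply] at h0 h2
      rw [← h0] at h2
      exact one_ne_zero h2.symm
    · rw [if_neg hi, if_pos hj] at h2
      simp [Pi.smul_apply] at h2
    · rw [if_neg hi, if_neg hj] at h0 h1
      simp [Pi.smul_apply] at h0 h1
      apply hne
      have : ((i : ℕ) - (d + 1) : ℕ) = ((j : ℕ) - (d + 1) : ℕ) :=
        Nat.cast_injective (R := ℂ) (h1.trans (by rw [← h0, one_mul]))
      have hi' : ¬ (i : ℕ) < d + 1 := hi
      have hj' : ¬ (j : ℕ) < d + 1 := hj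
      exact Fin.ext (by omega)
  · refine ⟨e2, ?_, ?_⟩
    · intro h
      have := congrFun h 2
      simp [e2] at this
    · intro F hF hvan hord
      have hlow : ∀ m : Fin 3 →₀ ℕ, m 0 + m 1 < d - 1 → coeff m F = 0 :=
        fun m hm => coeff_eq_zero_of_ordGe hF hord m hm
      -- the first polynomial
      have hc0 : ∀ j < d + 1, coeff (μ0 d j) F = 0 := by
        have hp0 : (∑ k ∈ Finset.range (d + 1),
            Polynomial.C (coeff (μ0 d k) F) * Polynomial.X ^ k) = 0 := by
          apply Polynomial.eq_zero_of_natDegree_lt_card_of_eval_eq_zero _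
            (f := fun x : Fin (d + 1) => ((x : ℕ) : ℂ))
            (fun a b hab => Fin.ext (Nat.cast_injective hab))
          · intro x
            have hx : ((⟨(x : ℕ), by omega⟩ : Fin (2 * d + 1)) : ℕ) < d + 1 := by
              simp; omega
            have hv := hvan ⟨(x : ℕ), by omega⟩
            dsimp only at hv
            rw [if_pos hx] at hv
            have := eval_point hF hlow ((x : ℕ) : ℂ) 0
            rw [hv] at this
            rw [Polynomial.eval_finset_sum]
            simp only [Polynomial.eval_mul, Polynomial.eval_C, Polynomial.eval_pow,
              Polynomial.eval_X]
            rw [zero_mul, add_zero] at this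
            exact this.symm
          · calc (∑ k ∈ Finset.range (d + 1),
                Polynomial.C (coeff (μ0 d k) F) * Polynomial.X ^ k).natDegree ≤ d := by
                  apply Polynomial.natDegree_sum_le_of_forall_le
                  intro k hk
                  exact le_trans (Polynomial.natDegree_C_mul_X_pow_le _ _)
                    (by simpa using Nat.lt_succ_iff.mp (Finset.mem_range.mp hk))
              _ < Fintype.card (Fin (d + 1)) := by simp
        intro j hj
        have := congrArg (fun r => Polynomial.coeff r j) hp0
        simpa [coeff_sum_CX _ hj] using this
      -- the second polynomial
      have hc1 : ∀ j < d, coeff (μ1 d j) F = 0 := by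
        have hq0 : (∑ k ∈ Finset.range d,
            Polynomial.C (coeff (μ1 d k) F) * Polynomial.X ^ k) = 0 := by
          apply Polynomial.eq_zero_of_natDegree_lt_card_of_eval_eq_zero _
            (f := fun x : Fin d => ((x : ℕ) : ℂ))
            (fun a b hab => Fin.ext (Nat.cast_injective hab))
          · intro x
            have hx : ¬ ((⟨d + 1 + (x : ℕ), by omega⟩ : Fin (2 * d + 1)) : ℕ) < d + 1 := by
              simp; omega
            have hv := hvan ⟨d + 1 + (x : ℕ), by omega⟩
            dsimp only at hv
            rw [if_neg hx] at hv
            have hsub : ((⟨d + 1 + (x : ℕ), by omega⟩ : Fin (2 * d + 1)) : ℕ) - (d + 1)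
                = (x : ℕ) := by simp
            rw [hsub] at hv
            have heq := eval_point hF hlow ((x : ℕ) : ℂ) 1
            rw [hv] at heq
            have hzero : (∑ j ∈ Finset.range (d + 1),
                coeff (μ0 d j) F * ((x : ℕ) : ℂ) ^ j) = 0 := by
              apply Finset.sum_eq_zero
              intro j hj
              rw [hc0 j (Finset.mem_range.mp hj), zero_mul]
            rw [hzero, zero_add, one_mul] at heq
            rw [Polynomial.eval_finset_sum]
            simp only [Polynomial.eval_mul, Polynomial.eval_C, Polynomial.eval_pow,
              Polynomial.eval_X]
            exact heq.symm
          · calc (∑ k ∈ Finset.range d,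
                Polynomial.C (coeff (μ1 d k) F) * Polynomial.X ^ k).natDegree ≤ d - 1 := by
                  apply Polynomial.natDegree_sum_le_of_forall_le
                  intro k hk
                  exact le_trans (Polynomial.natDegree_C_mul_X_pow_le _ _)
                    (by have := Finset.mem_range.mp hk; omega)
              _ < Fintype.card (Fin d) := by simp; omega
        intro j hj
        have := congrArg (fun r => Polynomial.coeff r j) hq0
        simpa [coeff_sum_CX _ hj] using this
      -- conclude
      ext m
      rw [coeff_zero]
      by_contra hcm
      have hmem : m ∈ F.support := MvPolynomial.mem_support_iff.mpr hcm
      have := support_subset_of_coeffs hF hlow hmem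
      rw [Finset.mem_union, Finset.mem_image, Finset.mem_image] at this
      rcases this with ⟨j, hj, rfl⟩ | ⟨j, hj, rfl⟩
    
      · exact hcm (hc0 j (Finset.mem_range.mp hj))
      · exact hcm (hc1 j (Finset.mem_range.mp hj))
end

section
/- Let F ∈ ℂ[x₀,x₁,x₂] be a nonzero homogeneous polynomial of degree d ≥ 1 and let Q ∈ ℂ³ be a nonzero vector. If F vanishes to order at least d at Q (i.e., every iterated partial derivative of F of total order at most d−1 vanishes at Q), then there exist linear forms ℓ₁,…,ℓ_d ∈ ℂ[x₀,x₁,x₂], each vanishing at Q, such that F = ℓ₁ ⋯ ℓ_d. In other words, a plane curve of degree d with a point of multiplicity at least d is a cone of d lines through that point. -/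
open MvPolynomial

namespace ConeOfLines

open Finsupp

/-! ### Linear substitution by a matrix -/

noncomputable def lin (M : Matrix (Fin 3) (Fin 3) ℂ) : Fin 3 → MvPolynomial (Fin 3) ℂ :=
  fun i => ∑ j, MvPolynomial.C (M i j) * MvPolynomial.X j

noncomputable def subM (M : Matrix (Fin 3) (Fin 3) ℂ) :
    MvPolynomial (Fin 3) ℂ →ₐ[ℂ] MvPolynomial (Fin 3) ℂ := aeval (lin M)

lemma aeval_eq_eval' (B : Fin 3 → ℂ) (G : MvPolynomial (Fin 3) ℂ) :
    aeval B G = MvPolynomial.eval B G := by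
  rw [← MvPolynomial.coe_aeval_eq_eval]
  rfl

lemma eval_subM (M : Matrix (Fin 3) (Fin 3) ℂ) (B : Fin 3 → ℂ) (F : MvPolynomial (Fin 3) ℂ) :
    MvPolynomial.eval B (subM M F) = MvPolynomial.eval (M.mulVec B) F := by
  have h1 : aeval B (aeval (lin M) F) = aeval (fun i => aeval B (lin M i)) F :=
    comp_aeval_apply (f := lin M) (aeval B) F
  have h3 : (fun i => aeval B (lin M i)) = M.mulVec B := by
    funext i
    simp [lin, aeval_eq_eval', Matrix.mulVec, dotProduct]
  rw [subM, ← aeval_eq_eval', h1, h3, aeval_eq_eval']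

lemma subM_X (M : Matrix (Fin 3) (Fin 3) ℂ) (i : Fin 3) : subM M (MvPolynomial.X i) = lin M i := by
  simp [subM]

lemma pderiv_lin (M : Matrix (Fin 3) (Fin 3) ℂ) (i k : Fin 3) :
    pderiv k (lin M i) = MvPolynomial.C (M i k) := by
  rw [lin, map_sum]
  rw [Finset.sum_eq_single k]
  · simp
  · intro j _ hj
    rw [pderiv_C_mul, pderiv_X_of_ne hj, mul_zero]
  · simp

lemma chain (M : Matrix (Fin 3) (Fin 3) ℂ) (F : MvPolynomial (Fin 3) ℂ) (k : Fin 3) :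
    pderiv k (subM M F) = ∑ i, MvPolynomial.C (M i k) * subM M (pderiv i F) := by
  induction F using MvPolynomial.induction_on with
  | C a => simp [subM, pderiv_C]
  | add p q hp hq =>
      simp only [map_add, pderiv_C, hp, hq, Finset.sum_add_distrib, mul_add]
  | mul_X p n hp =>
      rw [map_mul, subM_X, pderiv_mul, hp, pderiv_lin]
      have : ∀ i, pderiv i (p * MvPolynomial.X n)
          = pderiv i p * MvPolynomial.X n + (if i = n then p else 0) := by
        intro i
        rw [pderiv_mul]
        by_cases h : i = n
        · subst h; simp
        · simp [pderiv_X_of_ne (Ne.symm h), h]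
      simp only [this, map_add, map_mul, mul_add, Finset.sum_add_distrib, subM_X]
      congr 1
      · rw [Finset.sum_mul]
        congr 1
        funext i
        ring
      · rw [Finset.sum_eq_single n] <;> simp +contextual [mul_comm]

/-! ### Derivatives commute -/

lemma pderiv_comm' (i j : Fin 3) (F : MvPolynomial (Fin 3) ℂ) :
    pderiv i (pderiv j F) = pderiv j (pderiv i F) := by
  induction F using MvPolynomial.induction_on' with
  | monomial s a =>
      by_cases h : i = j
      · subst h; rfl
      · simp only [pderiv_monomial]
        congr 1
        · rw [tsub_tsub, tsub_tsub, add_comm]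
        · have h1 : ((s - single j 1 : Fin 3 →₀ ℕ)) i = s i := by
            rw [Finsupp.tsub_apply, Finsupp.single_eq_of_ne h, tsub_zero]
          have h2 : ((s - single i 1 : Fin 3 →₀ ℕ)) j = s j := by
            rw [Finsupp.tsub_apply, Finsupp.single_eq_of_ne (Ne.symm h), tsub_zero]
          rw [h1, h2]
          ring
  | add p q hp hq => simp only [map_add, hp, hq]

lemma iter_comm (j : Fin 3) (n : ℕ) (i : Fin 3) (F : MvPolynomial (Fin 3) ℂ) :
    pderiv i ((fun G : MvPolynomial (Fin 3) ℂ => pderiv j G)^[n] F)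
      = (fun G : MvPolynomial (Fin 3) ℂ => pderiv j G)^[n] (pderiv i F) := by
  induction n generalizing F with
  | zero => rfl
  | succ n ih =>
      rw [Function.iterate_succ_apply', Function.iterate_succ_apply']
      rw [pderiv_comm' i j, ih]

lemma pderiv_pd (i : Fin 3) (β : Fin 3 → ℕ) (F : MvPolynomial (Fin 3) ℂ) :
    ∃ β' : Fin 3 → ℕ, β' 0 + β' 1 + β' 2 = β 0 + β 1 + β 2 + 1 ∧
      pderiv i (pd β F) = pd β' F := by
  fin_cases i
  · refine ⟨![β 0 + 1, β 1, β 2], by simp; ring, ?_⟩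
    simp only [pd, Matrix.cons_val_zero, Matrix.cons_val_one, Matrix.head_cons,
      Matrix.cons_val_two, Matrix.tail_cons]
    rw [Function.iterate_succ_apply']
    rfl
  · refine ⟨![β 0, β 1 + 1, β 2], by simp; ring, ?_⟩
    simp only [pd, Matrix.cons_val_zero, Matrix.cons_val_one, Matrix.head_cons,
      Matrix.cons_val_two, Matrix.tail_cons]
    rw [iter_comm, Function.iterate_succ_apply']
    rfl
  · refine ⟨![β 0, β 1, β 2 + 1], by simp; ring, ?_⟩
    simp only [pd, Matrix.cons_val_zero, Matrix.cons_val_one, Matrix.head_cons,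
      Matrix.cons_val_two, Matrix.tail_cons]
    rw [iter_comm, iter_comm, Function.iterate_succ_apply']
    rfl

/-! ### Transfer of the vanishing-order condition under linear substitution -/

lemma ordGe_subM (M : Matrix (Fin 3) (Fin 3) ℂ) (B : Fin 3 → ℂ) (F : MvPolynomial (Fin 3) ℂ)
    (m : ℕ) (h : ordGe m (M.mulVec B) F) : ordGe m B (subM M F) := by
  intro α hα
  set Sgen : ℕ → Set (MvPolynomial (Fin 3) ℂ) :=
    fun k => {G | ∃ β : Fin 3 → ℕ, β 0 + β 1 + β 2 = k ∧ G = subM M (pd β F)} with hSgen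
  have key : ∀ (j : Fin 3) (k : ℕ) (G : MvPolynomial (Fin 3) ℂ),
      G ∈ Submodule.span ℂ (Sgen k) → pderiv j G ∈ Submodule.span ℂ (Sgen (k+1)) := by
    intro j k G hG
    induction hG using Submodule.span_induction with
    | mem x hx =>
        obtain ⟨β, hβ, rfl⟩ := hx
        rw [chain]
        apply Submodule.sum_mem
        intro i _
        rw [← MvPolynomial.smul_eq_C_mul]
        apply Submodule.smul_mem
        obtain ⟨β', hβ', hpd⟩ := pderiv_pd i β F
        rw [hpd]
        exact Submodule.subset_span ⟨β', by rw [hβ', hβ], rfl⟩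
    | zero => rw [map_zero]; exact Submodule.zero_mem _
    | add x y hx hy ihx ihy => rw [map_add]; exact Submodule.add_mem _ ihx ihy
    | smul a x hx ihx =>
        rw [Derivation.map_smul]
        exact Submodule.smul_mem _ _ ihx
  have iter : ∀ (j : Fin 3) (n k : ℕ) (G : MvPolynomial (Fin 3) ℂ),
      G ∈ Submodule.span ℂ (Sgen k) →
      (fun G : MvPolynomial (Fin 3) ℂ => pderiv j G)^[n] G ∈ Submodule.span ℂ (Sgen (k+n)) := by
    intro j n
    induction n with
    | zero => intro k G hG; simpa using hG
    | succ n ih =>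
        intro k G hG
        rw [Function.iterate_succ_apply']
        have := key j (k + n) _ (ih k G hG)
        simpa [Nat.add_assoc] using this
  have h0 : subM M F ∈ Submodule.span ℂ (Sgen 0) :=
    Submodule.subset_span ⟨fun _ => 0, by simp, rfl⟩
  have hmem : pd α (subM M F) ∈ Submodule.span ℂ (Sgen (α 0 + α 1 + α 2)) := by
    have h1 := iter 2 (α 2) 0 _ h0
    have h2 := iter 1 (α 1) _ _ h1
    have h3 := iter 0 (α 0) _ _ h2
    rw [pd]
    convert h3 using 2
    ring_nf
  have hker : Submodule.span ℂ (Sgen (α 0 + α 1 + α 2)) ≤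
      LinearMap.ker (aeval B : MvPolynomial (Fin 3) ℂ →ₐ[ℂ] ℂ).toLinearMap := by
    rw [Submodule.span_le]
    rintro x ⟨β, hβ, rfl⟩
    simp only [SetLike.mem_coe, LinearMap.mem_ker, AlgHom.toLinearMap_apply]
    rw [aeval_eq_eval', eval_subM]
    exact h β (by rw [hβ]; exact hα)
  have := hker hmem
  simp only [LinearMap.mem_ker, AlgHom.toLinearMap_apply] at this
  rw [← aeval_eq_eval']
  exact this
-- iterated pderiv of a monomial
lemma iter_pderiv_monomial (i : Fin 3) (n : ℕ) (β : Fin 3 →₀ ℕ) (c : ℂ) :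
    (fun G : MvPolynomial (Fin 3) ℂ => pderiv i G)^[n] (monomial β c)
      = monomial (β - single i n) (c * (β i).descFactorial n) := by
  induction n with
  | zero => simp
  | succ n ih =>
      rw [Function.iterate_succ_apply', ih, pderiv_monomial]
      congr 1
      · rw [tsub_tsub, ← Finsupp.single_add]
      · have : ((β - single i n : Fin 3 →₀ ℕ)) i = β i - n := by
          rw [Finsupp.tsub_apply, Finsupp.single_eq_same]
        rw [this, Nat.descFactorial_succ]
        rw [Nat.cast_mul]
        ring

-- eval at (0,0,1) of a monomial
lemma eval_e2_monomial (γ : Fin 3 →₀ ℕ) (c : ℂ) :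
    eval (fun i => ![0,0,1] i : Fin 3 → ℂ) (monomial γ c)
      = if γ 0 = 0 ∧ γ 1 = 0 then c else 0 := by
  rw [eval_monomial]
  rw [Finsupp.prod_fintype _ _ (fun i => pow_zero _)]
  rw [Fin.prod_univ_three]
  simp only [Matrix.cons_val_zero, Matrix.cons_val_one, Matrix.head_cons,
    Matrix.cons_val_two, Matrix.tail_cons, one_pow]
  by_cases h0 : γ 0 = 0
  · by_cases h1 : γ 1 = 0
    · simp [h0, h1]
    · simp [h0, h1, zero_pow h1]
  · simp [h0, zero_pow h0]

lemma pd_eq_linear (α : Fin 3 → ℕ) (F : MvPolynomial (Fin 3) ℂ) :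
    pd α F = ((((pderiv (0 : Fin 3)).toLinearMap : Module.End ℂ (MvPolynomial (Fin 3) ℂ)) ^ (α 0))
      ∘ₗ (((pderiv (1 : Fin 3)).toLinearMap : Module.End ℂ (MvPolynomial (Fin 3) ℂ)) ^ (α 1))
      ∘ₗ (((pderiv (2 : Fin 3)).toLinearMap : Module.End ℂ (MvPolynomial (Fin 3) ℂ)) ^ (α 2))) F := by
  simp only [LinearMap.coe_comp, Function.comp_apply, Module.End.pow_apply]
  rfl

lemma pd_sum {ι : Type*} (s : Finset ι) (f : ι → MvPolynomial (Fin 3) ℂ) (α : Fin 3 → ℕ) :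
    pd α (∑ x ∈ s, f x) = ∑ x ∈ s, pd α (f x) := by
  simp only [pd_eq_linear, map_sum]

lemma eval_pd_monomial (a b : ℕ) (β : Fin 3 →₀ ℕ) (c : ℂ) :
    eval (fun i => ![0,0,1] i : Fin 3 → ℂ) (pd ![a,b,0] (monomial β c))
      = if β 0 = a ∧ β 1 = b then c * (a.factorial * b.factorial) else 0 := by
  have hpd : pd ![a,b,0] (monomial β c)
      = monomial ((β - single 1 b) - single 0 a)
          (c * (β 1).descFactorial b * (((β - single 1 b : Fin 3 →₀ ℕ)) 0).descFactorial a) := by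
    simp only [pd, Matrix.cons_val_zero, Matrix.cons_val_one, Matrix.head_cons,
      Matrix.cons_val_two, Matrix.tail_cons, Function.iterate_zero_apply]
    rw [iter_pderiv_monomial, iter_pderiv_monomial]
  have h10 : ((β - single 1 b : Fin 3 →₀ ℕ)) 0 = β 0 := by
    rw [Finsupp.tsub_apply, Finsupp.single_eq_of_ne (by decide), tsub_zero]
  rw [hpd, h10, eval_e2_monomial]
  have hg0 : ((β - single 1 b - single 0 a : Fin 3 →₀ ℕ)) 0 = β 0 - a := by
    rw [Finsupp.tsub_apply, h10, Finsupp.single_eq_same]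
  have hg1 : ((β - single 1 b - single 0 a : Fin 3 →₀ ℕ)) 1 = β 1 - b := by
    rw [Finsupp.tsub_apply, Finsupp.tsub_apply, Finsupp.single_eq_same,
      Finsupp.single_eq_of_ne (by decide), tsub_zero]
  rw [hg0, hg1]
  by_cases hab : β 0 = a ∧ β 1 = b
  · obtain ⟨h1, h2⟩ := hab
    subst h1; subst h2
    simp [Nat.descFactorial_self, mul_comm, mul_assoc, mul_left_comm]
  · rw [if_neg hab]
    by_cases h0 : β 0 - a = 0 ∧ β 1 - b = 0
    · rw [if_pos h0]
      -- then β 0 ≤ a, β 1 ≤ b, not both equal, so one strict: a descFactorial vanishes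
      rcases Nat.lt_or_ge (β 0) a with hlt | hge
      · rw [Nat.descFactorial_eq_zero_iff_lt.mpr hlt]
        ring
      · have hba : β 0 = a := by omega
        have : β 1 < b := by
          rcases Nat.lt_or_ge (β 1) b with h | h
          · exact h
          · exfalso; exact hab ⟨hba, by omega⟩
        rw [Nat.descFactorial_eq_zero_iff_lt.mpr this]
        ring
    · rw [if_neg h0]

lemma degree_eq (d : ℕ) {G : MvPolynomial (Fin 3) ℂ} (hG : G.IsHomogeneous d)
    {β : Fin 3 →₀ ℕ} (hβ : β ∈ G.support) : β 0 + β 1 + β 2 = d := by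
  have h1 : β.degree = d := by
    by_contra hne
    exact (MvPolynomial.mem_support_iff.mp hβ) (hG.coeff_eq_zero hne)
  rw [← h1, Finsupp.degree_apply]
  rw [Finset.sum_subset (Finset.subset_univ β.support)
    (fun i _ hi => Finsupp.notMem_support_iff.mp hi)]
  rw [Fin.sum_univ_three]

lemma supp2 (d : ℕ) (G : MvPolynomial (Fin 3) ℂ) (hG : G.IsHomogeneous d)
    (hord : ordGe d (fun i => ![0,0,1] i) G) :
    ∀ β ∈ G.support, β 2 = 0 := by
  intro β hβ
  by_contra hβ2
  have hdeg := degree_eq d hG hβ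
  have hlt : β 0 + β 1 < d := by omega
  have hval := hord ![β 0, β 1, 0] (by
    show β 0 + β 1 + 0 < d
    omega)
  rw [show G = ∑ β' ∈ G.support, monomial β' (coeff β' G) from (as_sum G),
    pd_sum, map_sum] at hval
  rw [Finset.sum_eq_single β] at hval
  · rw [eval_pd_monomial, if_pos ⟨rfl, rfl⟩] at hval
    have : coeff β G = 0 := by
      have hfac : ((Nat.factorial (β 0) : ℂ) * (Nat.factorial (β 1) : ℂ)) ≠ 0 :=
        mul_ne_zero (Nat.cast_ne_zero.mpr (Nat.factorial_ne_zero _))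
          (Nat.cast_ne_zero.mpr (Nat.factorial_ne_zero _))
      rcases mul_eq_zero.mp hval with h | h
      · exact h
      · exact absurd h hfac
    exact (MvPolynomial.mem_support_iff.mp hβ) this
  · intro β' hβ' hne
    rw [eval_pd_monomial]
    rw [if_neg]
    rintro ⟨h0, h1⟩
    apply hne
    have hdeg' := degree_eq d hG hβ'
    ext i
    fin_cases i
    · exact h0
    · exact h1
    · simpa using (by omega : β' 2 = β 2)
  · intro h
    exact absurd hβ h

noncomputable def psi : MvPolynomial (Fin 3) ℂ →ₐ[ℂ] Polynomial ℂ :=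
  MvPolynomial.aeval ![Polynomial.X, 1, 0]

lemma psi_monomial (β : Fin 3 →₀ ℕ) (c : ℂ) (hβ2 : β 2 = 0) :
    psi (monomial β c) = Polynomial.C c * Polynomial.X ^ (β 0) := by
  rw [psi, MvPolynomial.aeval_monomial]
  rw [Finsupp.prod_fintype _ _ (fun i => pow_zero _)]
  rw [Fin.prod_univ_three, hβ2]
  simp [Polynomial.algebraMap_eq]

lemma psi_coeff (G : MvPolynomial (Fin 3) ℂ) (h2 : ∀ β ∈ G.support, β 2 = 0) (i : ℕ) :
    (psi G).coeff i = ∑ β ∈ G.support, if β 0 = i then MvPolynomial.coeff β G else 0 := by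
  conv_lhs => rw [show G = ∑ β ∈ G.support, monomial β (MvPolynomial.coeff β G) from as_sum G]
  rw [map_sum, Polynomial.finset_sum_coeff]
  apply Finset.sum_congr rfl
  intro β hβ
  rw [psi_monomial _ _ (h2 β hβ), Polynomial.coeff_C_mul, Polynomial.coeff_X_pow]
  by_cases h : β 0 = i
  · simp [h]
  · simp [h, Ne.symm h]

noncomputable def fm (i j : ℕ) : Fin 3 →₀ ℕ := Finsupp.single 0 i + Finsupp.single 1 j

lemma fm_apply0 (i j : ℕ) : fm i j 0 = i := by simp [fm]
lemma fm_apply1 (i j : ℕ) : fm i j 1 = j := by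
  simp [fm, Finsupp.single_eq_of_ne (show (0:Fin 3) ≠ 1 by decide)]
lemma fm_apply2 (i j : ℕ) : fm i j 2 = 0 := by
  simp [fm, Finsupp.single_eq_of_ne (show (0:Fin 3) ≠ 2 by decide),
    Finsupp.single_eq_of_ne (show (1:Fin 3) ≠ 2 by decide)]


lemma beta_eq_fm (d : ℕ) {G : MvPolynomial (Fin 3) ℂ} (hG : G.IsHomogeneous d)
    (h2 : ∀ β ∈ G.support, β 2 = 0) {β : Fin 3 →₀ ℕ} (hβ : β ∈ G.support) :
    β = fm (β 0) (d - β 0) := by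
  have hd := degree_eq d hG hβ
  have h2' := h2 β hβ
  ext i
  fin_cases i
  · simpa using (fm_apply0 (β 0) (d - β 0)).symm
  · simpa using (by rw [fm_apply1]; omega : β 1 = fm (β 0) (d - β 0) 1)
  · simpa using (by rw [fm_apply2]; omega : β 2 = fm (β 0) (d - β 0) 2)

lemma psi_coeff_eq (d : ℕ) (G : MvPolynomial (Fin 3) ℂ) (hG : G.IsHomogeneous d)
    (h2 : ∀ β ∈ G.support, β 2 = 0) (i : ℕ) :
    (psi G).coeff i = MvPolynomial.coeff (fm i (d - i)) G := by
  rw [psi_coeff G h2 i]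
  have step : ∀ β ∈ G.support,
      (if β 0 = i then MvPolynomial.coeff β G else 0)
        = (if β = fm i (d - i) then MvPolynomial.coeff β G else 0) := by
    intro β hβ
    congr 1
    apply propext
    constructor
    · intro h
      rw [beta_eq_fm d hG h2 hβ, h]
    · intro h
      rw [h, fm_apply0]
  rw [Finset.sum_congr rfl step, Finset.sum_ite_eq' G.support (fm i (d-i))
    (fun β => MvPolynomial.coeff β G)]
  by_cases h : fm i (d-i) ∈ G.support
  · rw [if_pos h]
  · rw [if_neg h, eq_comm]
    exact MvPolynomial.notMem_support_iff.mp h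

lemma psi_natDegree_le (d : ℕ) (G : MvPolynomial (Fin 3) ℂ) (hG : G.IsHomogeneous d)
    (h2 : ∀ β ∈ G.support, β 2 = 0) : (psi G).natDegree ≤ d := by
  apply Polynomial.natDegree_le_iff_coeff_eq_zero.mpr
  intro i hi
  rw [psi_coeff G h2 i]
  apply Finset.sum_eq_zero
  intro β hβ
  rw [if_neg]
  intro h
  have := degree_eq d hG hβ
  omega

lemma psi_ne_zero (d : ℕ) (G : MvPolynomial (Fin 3) ℂ) (hG : G.IsHomogeneous d)
    (h2 : ∀ β ∈ G.support, β 2 = 0) (hG0 : G ≠ 0) : psi G ≠ 0 := by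
  obtain ⟨β, hβ⟩ := Finset.nonempty_iff_ne_empty.mpr
    (fun h => hG0 (MvPolynomial.support_eq_empty.mp h))
  intro hpsi
  have h1 : (psi G).coeff (β 0) = MvPolynomial.coeff (fm (β 0) (d - β 0)) G :=
    psi_coeff_eq d G hG h2 (β 0)
  rw [hpsi, Polynomial.coeff_zero, ← beta_eq_fm d hG h2 hβ, eq_comm] at h1
  exact (MvPolynomial.mem_support_iff.mp hβ) h1

lemma psi_inj (d : ℕ) (G H : MvPolynomial (Fin 3) ℂ) (hG : G.IsHomogeneous d)
    (hH : H.IsHomogeneous d) (h2G : ∀ β ∈ G.support, β 2 = 0)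
    (h2H : ∀ β ∈ H.support, β 2 = 0) (hpsi : psi G = psi H) : G = H := by
  apply MvPolynomial.ext
  intro β
  by_cases hβG : β ∈ G.support
  · have h1 := beta_eq_fm d hG h2G hβG
    calc MvPolynomial.coeff β G = (psi G).coeff (β 0) := by
          rw [psi_coeff_eq d G hG h2G, ← h1]
      _ = (psi H).coeff (β 0) := by rw [hpsi]
      _ = MvPolynomial.coeff β H := by rw [psi_coeff_eq d H hH h2H, ← h1]
  · by_cases hβH : β ∈ H.support
    · have h1 := beta_eq_fm d hH h2H hβH
      calc MvPolynomial.coeff β G = (psi G).coeff (β 0) := by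
            rw [psi_coeff_eq d G hG h2G, ← h1]
        _ = (psi H).coeff (β 0) := by rw [hpsi]
        _ = MvPolynomial.coeff β H := by rw [psi_coeff_eq d H hH h2H, ← h1]
    · rw [MvPolynomial.notMem_support_iff.mp hβG, MvPolynomial.notMem_support_iff.mp hβH]

lemma supported_supp_cond (H : MvPolynomial (Fin 3) ℂ)
    (h : H ∈ supported ℂ ({0,1} : Set (Fin 3))) : ∀ β ∈ H.support, β 2 = 0 := by
  intro β hβ
  by_contra h2
  have hv : (2 : Fin 3) ∈ H.vars := (MvPolynomial.mem_vars _).mpr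
    ⟨β, hβ, Finsupp.mem_support_iff.mpr h2⟩
  have := (MvPolynomial.mem_supported.mp h) hv
  simp at this

lemma split_e2 (d : ℕ) (hd : 1 ≤ d) (G : MvPolynomial (Fin 3) ℂ) (hG0 : G ≠ 0)
    (hG : G.IsHomogeneous d) (h2 : ∀ β ∈ G.support, β 2 = 0) :
    ∃ ℓ' : Fin d → MvPolynomial (Fin 3) ℂ,
      (∀ k, (ℓ' k).IsHomogeneous 1 ∧
        MvPolynomial.eval (fun i => ![0,0,1] i : Fin 3 → ℂ) (ℓ' k) = 0) ∧
      G = ∏ k, ℓ' k := by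
  classical
  set p := psi G with hp
  have hp0 : p ≠ 0 := psi_ne_zero d G hG h2 hG0
  have hsplits : p.Splits := IsAlgClosed.splits p
  have hfact := hsplits.eq_prod_roots
  have hcard : p.roots.card = p.natDegree := (Polynomial.splits_iff_card_roots.mp hsplits)
  set l := p.roots.toList with hl
  have hlen : l.length = p.natDegree := by rw [hl, Multiset.length_toList, hcard]
  set e := p.natDegree with hedef
  have he : e ≤ d := psi_natDegree_le d G hG h2
  set c := p.leadingCoeff with hc
  set rf : ℕ → MvPolynomial (Fin 3) ℂ :=
    fun k => if h : k < l.length then X 0 - MvPolynomial.C (l.get ⟨k, h⟩) * X 1 else X 1 with hrf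
  set H := MvPolynomial.C c * ∏ k ∈ Finset.range d, rf k with hH
  -- psi of root factors
  set prf : ℕ → Polynomial ℂ :=
    fun k => if h : k < l.length then Polynomial.X - Polynomial.C (l.get ⟨k, h⟩) else 1 with hprf
  have psi_rf : ∀ k, psi (rf k) = if k < e then prf k else 1 := by
    intro k
    by_cases hk : k < l.length
    · rw [hrf]
      simp only [dif_pos hk]
      rw [if_pos (by omega : k < e), hprf]
      simp only [dif_pos hk]
      rw [psi]
      rw [map_sub, map_mul, MvPolynomial.aeval_X, MvPolynomial.aeval_X, MvPolynomial.aeval_C]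
      simp [Polynomial.algebraMap_eq]
    · rw [hrf]
      simp only [dif_neg hk]
      rw [if_neg (by omega : ¬ k < e), psi, MvPolynomial.aeval_X]
      simp
  have hpsiH : psi H = p := by
    rw [hH, map_mul, map_prod]
    have h1 : psi (MvPolynomial.C c) = Polynomial.C c := by
      rw [psi, MvPolynomial.aeval_C, Polynomial.algebraMap_eq]
    rw [h1]
    rw [Finset.prod_congr rfl (fun k _ => psi_rf k)]
    rw [← Finset.prod_range_mul_prod_Ico _ he]
    have hIco : ∏ k ∈ Finset.Ico e d, (if k < e then prf k else 1) = 1 := by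
      apply Finset.prod_eq_one
      intro k hk
      have hke := (Finset.mem_Ico.mp hk).1
      rw [if_neg (by omega : ¬ k < e)]
    have hrange : ∏ k ∈ Finset.range e, (if k < e then prf k else 1)
        = (p.roots.map fun a => Polynomial.X - Polynomial.C a).prod := by
      rw [Finset.prod_congr rfl (fun k hk => if_pos (Finset.mem_range.mp hk))]
      calc ∏ k ∈ Finset.range e, prf k
          = ∏ k ∈ Finset.range l.length, prf k := by rw [hlen]
        _ = ∏ i : Fin l.length, prf ↑i := (Fin.prod_univ_eq_prod_range prf l.length).symm
        _ = ∏ i : Fin l.length, (Polynomial.X - Polynomial.C (l.get i)) := by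
            apply Finset.prod_congr rfl
            intro i _
            rw [hprf]
            simp only [dif_pos i.isLt]
        _ = (List.ofFn (fun i : Fin l.length =>
              Polynomial.X - Polynomial.C (l.get i))).prod := List.prod_ofFn.symm
        _ = (l.map (fun a => Polynomial.X - Polynomial.C a)).prod := by
            rw [← List.ofFn_getElem_eq_map l (fun a => Polynomial.X - Polynomial.C a)]; rfl
        _ = (Multiset.map (fun a => Polynomial.X - Polynomial.C a) p.roots).prod := by
            rw [← Multiset.coe_toList p.roots, ← hl, Multiset.map_coe, Multiset.prod_coe]
    rw [hIco, hrange, mul_one]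
    exact hfact.symm
  -- homogeneity of the factors
  have hrf_hom : ∀ k, (rf k).IsHomogeneous 1 := by
    intro k
    rw [hrf]
    by_cases hk : k < l.length
    · simp only [dif_pos hk]
      exact (isHomogeneous_X _ _).sub (isHomogeneous_C_mul_X _ _)
    · simp only [dif_neg hk]
      exact isHomogeneous_X _ _
  have hH_hom : H.IsHomogeneous d := by
    rw [hH]
    have hprod : (∏ k ∈ Finset.range d, rf k).IsHomogeneous d := by
      have := MvPolynomial.IsHomogeneous.prod (Finset.range d) rf (fun _ => 1)
        (fun k _ => hrf_hom k)
      simpa using this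
    exact hprod.C_mul c
  have hH_supp : ∀ β ∈ H.support, β 2 = 0 := by
    apply supported_supp_cond
    rw [hH]
    apply mul_mem
    · rw [show (MvPolynomial.C c : MvPolynomial (Fin 3) ℂ)
        = algebraMap ℂ (MvPolynomial (Fin 3) ℂ) c from rfl]
      exact Subalgebra.algebraMap_mem _ c
    · apply prod_mem
      intro k _
      rw [hrf]
      by_cases hk : k < l.length
      · simp only [dif_pos hk]
        apply sub_mem
        · exact MvPolynomial.X_mem_supported.mpr (by simp)
        · apply mul_mem
          · rw [show (MvPolynomial.C (l.get ⟨k, hk⟩) : MvPolynomial (Fin 3) ℂ)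
              = algebraMap ℂ (MvPolynomial (Fin 3) ℂ) _ from rfl]
            exact Subalgebra.algebraMap_mem _ _
          · exact MvPolynomial.X_mem_supported.mpr (by simp)
      · simp only [dif_neg hk]
        exact MvPolynomial.X_mem_supported.mpr (by simp)
  have hGH : G = H := psi_inj d G H hG hH_hom h2 hH_supp (by rw [hpsiH])
  -- the linear factors
  refine ⟨fun k => (if (k : ℕ) = d - 1 then MvPolynomial.C c else 1) * rf k, ?_, ?_⟩
  · intro k
    constructor
    · have h1 : ((if (k : ℕ) = d - 1 then MvPolynomial.C c else 1 :
          MvPolynomial (Fin 3) ℂ)).IsHomogeneous 0 := by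
        by_cases hk : (k : ℕ) = d - 1
        · rw [if_pos hk]; exact isHomogeneous_C _ _
        · rw [if_neg hk]; exact isHomogeneous_one _ _
      simpa using h1.mul (hrf_hom k)
    · rw [map_mul]
      have : MvPolynomial.eval (fun i => ![0,0,1] i : Fin 3 → ℂ) (rf k) = 0 := by
        rw [hrf]
        by_cases hk : (k : ℕ) < l.length
        · simp [dif_pos hk]
        · simp [dif_neg hk]
      rw [this, mul_zero]
  · rw [Finset.prod_mul_distrib, hGH, hH]
    congr 1
    · rw [Fin.prod_univ_eq_prod_range (fun k => if k = d - 1 then MvPolynomial.C c else 1) d,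
        Finset.prod_ite_eq' (Finset.range d) (d-1) (fun _ => MvPolynomial.C c),
        if_pos (Finset.mem_range.mpr (by omega))]
    · exact (Fin.prod_univ_eq_prod_range rf d).symm

lemma exists_matrix (Q : Fin 3 → ℂ) (hQ : Q ≠ 0) :
    ∃ M M' : Matrix (Fin 3) (Fin 3) ℂ, M * M' = 1 ∧ M' * M = 1 ∧
      M.mulVec Q = (fun i => ![0,0,1] i) := by
  have hj : ∃ j, Q j ≠ 0 := by
    by_contra h
    push_neg at h
    exact hQ (funext h)
  obtain ⟨j, hj⟩ := hj
  fin_cases j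
  · have h0 : Q 0 ≠ 0 := hj
    refine ⟨!![-Q 1/Q 0, 1, 0; -Q 2/Q 0, 0, 1; 1/Q 0, 0, 0],
      !![0, 0, Q 0; 1, 0, Q 1; 0, 1, Q 2], ?_, ?_, ?_⟩
    · ext i k
      fin_cases i <;> fin_cases k <;>
        simp [Matrix.mul_apply, Fin.sum_univ_three, Matrix.vecHead, Matrix.vecTail] <;> field_simp <;> ring
    · ext i k
      fin_cases i <;> fin_cases k <;>
        simp [Matrix.mul_apply, Fin.sum_univ_three, Matrix.vecHead, Matrix.vecTail] <;> field_simp <;> ring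
    · funext i
      fin_cases i <;>
        simp [Matrix.mulVec, dotProduct, Fin.sum_univ_three,
          Matrix.vecHead, Matrix.vecTail] <;> field_simp <;> ring
  · have h0 : Q 1 ≠ 0 := hj
    refine ⟨!![1, -Q 0/Q 1, 0; 0, -Q 2/Q 1, 1; 0, 1/Q 1, 0],
      !![1, 0, Q 0; 0, 0, Q 1; 0, 1, Q 2], ?_, ?_, ?_⟩
    · ext i k
      fin_cases i <;> fin_cases k <;>
        simp [Matrix.mul_apply, Fin.sum_univ_three, Matrix.vecHead, Matrix.vecTail] <;> field_simp <;> ring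
    · ext i k
      fin_cases i <;> fin_cases k <;>
        simp [Matrix.mul_apply, Fin.sum_univ_three, Matrix.vecHead, Matrix.vecTail] <;> field_simp <;> ring
    · funext i
      fin_cases i <;>
        simp [Matrix.mulVec, dotProduct, Fin.sum_univ_three,
          Matrix.vecHead, Matrix.vecTail] <;> field_simp <;> ring
  · have h0 : Q 2 ≠ 0 := hj
    refine ⟨!![1, 0, -Q 0/Q 2; 0, 1, -Q 1/Q 2; 0, 0, 1/Q 2],
      !![1, 0, Q 0; 0, 1, Q 1; 0, 0, Q 2], ?_, ?_, ?_⟩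
    · ext i k
      fin_cases i <;> fin_cases k <;>
        simp [Matrix.mul_apply, Fin.sum_univ_three, Matrix.vecHead, Matrix.vecTail] <;> field_simp <;> ring
    · ext i k
      fin_cases i <;> fin_cases k <;>
        simp [Matrix.mul_apply, Fin.sum_univ_three, Matrix.vecHead, Matrix.vecTail] <;> field_simp <;> ring
    · funext i
      fin_cases i <;>
        simp [Matrix.mulVec, dotProduct, Fin.sum_univ_three,
          Matrix.vecHead, Matrix.vecTail] <;> field_simp <;> ring

lemma subM_subM (M M' : Matrix (Fin 3) (Fin 3) ℂ) (F : MvPolynomial (Fin 3) ℂ) :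
    subM M (subM M' F) = subM (M' * M) F := by
  have : (subM M).comp (subM M') = subM (M' * M) := by
    apply MvPolynomial.algHom_ext
    intro i
    simp only [AlgHom.coe_comp, Function.comp_apply, subM, aeval_X]
    rw [lin, map_sum]
    simp only [map_mul, aeval_C, aeval_X]
    have : ∀ j, algebraMap ℂ (MvPolynomial (Fin 3) ℂ) (M' i j) * lin M j
        = ∑ k, C (M' i j * M j k) * X k := by
      intro j
      rw [lin, Finset.mul_sum]
      apply Finset.sum_congr rfl
      intro k _
      rw [MvPolynomial.algebraMap_eq, ← mul_assoc, ← C_mul]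
    rw [Finset.sum_congr rfl (fun j _ => this j), Finset.sum_comm]
    rw [lin]
    apply Finset.sum_congr rfl
    intro k _
    rw [← Finset.sum_mul, ← map_sum, Matrix.mul_apply]
  exact congrFun (congrArg (fun f => f.toFun) this) F

lemma subM_one (F : MvPolynomial (Fin 3) ℂ) : subM 1 F = F := by
  have hlin : lin (1 : Matrix (Fin 3) (Fin 3) ℂ) = X := by
    funext i
    rw [lin]
    rw [Finset.sum_eq_single i]
    · simp [Matrix.one_apply]
    · intro j _ hj
      rw [Matrix.one_apply_ne' hj]  -- check direction
      simp
    · simp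
  rw [subM, hlin, aeval_X_left_apply]

lemma lin_isHomogeneous (M : Matrix (Fin 3) (Fin 3) ℂ) (i : Fin 3) :
    (lin M i).IsHomogeneous 1 := by
  rw [lin]
  apply MvPolynomial.IsHomogeneous.sum
  intro j _
  exact isHomogeneous_C_mul_X _ _

lemma subM_isHomogeneous (M : Matrix (Fin 3) (Fin 3) ℂ) (F : MvPolynomial (Fin 3) ℂ) (d : ℕ)
    (hF : F.IsHomogeneous d) : (subM M F).IsHomogeneous d := by
  have := hF.aeval (lin M) (lin_isHomogeneous M)
  simpa [subM] using this

end ConeOfLines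

open ConeOfLines in
/-- A nonzero homogeneous polynomial of degree `d ≥ 1` vanishing to order at least `d`
at a nonzero point `Q` is a product of `d` linear forms, each vanishing at `Q`
(a cone of `d` lines through `Q`). -/
theorem cone_of_lines (d : ℕ) (hd : 1 ≤ d) (F : MvPolynomial (Fin 3) ℂ) (hF0 : F ≠ 0)
    (hF : F.IsHomogeneous d) (Q : Fin 3 → ℂ) (hQ : Q ≠ 0) (h : ordGe d Q F) :
    ∃ ℓ : Fin d → MvPolynomial (Fin 3) ℂ,
      (∀ k, (ℓ k).IsHomogeneous 1 ∧ MvPolynomial.eval Q (ℓ k) = 0) ∧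
      F = ∏ k, ℓ k := by
  obtain ⟨M, M', hMM', hM'M, hMQ⟩ := exists_matrix Q hQ
  set G := subM M' F with hG
  have hFG : F = subM M G := by
    rw [hG, subM_subM, hM'M, subM_one]
  have hQM' : M'.mulVec (fun i => ![0,0,1] i) = Q := by
    rw [← hMQ, Matrix.mulVec_mulVec, hM'M, Matrix.one_mulVec]
  have hGord : ordGe d (fun i => ![0,0,1] i) G := by
    apply ordGe_subM
    rw [hQM']
    exact h
  have hGhom : G.IsHomogeneous d := subM_isHomogeneous M' F d hF
  have hG0 : G ≠ 0 := by
    intro h0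
    apply hF0
    rw [hFG, h0, map_zero]
  have hGsupp := supp2 d G hGhom hGord
  obtain ⟨ℓ', hℓ', hGprod⟩ := split_e2 d hd G hG0 hGhom hGsupp
  refine ⟨fun k => subM M (ℓ' k), ?_, ?_⟩
  · intro k
    constructor
    · exact subM_isHomogeneous M _ 1 (hℓ' k).1
    · rw [eval_subM, hMQ, (hℓ' k).2]
  · rw [hFG, hGprod, map_prod]
end

section
/- Let d ≥ 1 be an integer and let Z = {P₀,…,P_d} be d+1 pairwise non-proportional nonzero vectors in ℂ³. Let Q ∈ ℂ³ be nonzero and suppose there exists a nonzero homogeneous polynomial F ∈ ℂ[x₀,x₁,x₂] of degree d with F(Pᵢ) = 0 for all i and F vanishing to order at least d at Q. Then there exist indices i ≠ j such that Q lies in the linear span of Pᵢ and P_j in ℂ³. -/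
open MvPolynomial

namespace SecantAux

abbrev MV := MvPolynomial (Fin 3) ℂ

lemma iter_pderiv_add (i : Fin 3) (n : ℕ) (F G : MV) :
    (fun G : MV => pderiv i G)^[n] (F + G) =
      (fun G : MV => pderiv i G)^[n] F + (fun G : MV => pderiv i G)^[n] G := by
  induction n generalizing F G with
  | zero => simp
  | succ n ih =>
    simp only [Function.iterate_succ_apply]
    rw [show pderiv i (F + G) = pderiv i F + pderiv i G from map_add _ _ _]
    exact ih _ _

lemma iter_pderiv_smul (i : Fin 3) (n : ℕ) (c : ℂ) (F : MV) :
    (fun G : MV => pderiv i G)^[n] (c • F) = c • (fun G : MV => pderiv i G)^[n] F := by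
  induction n generalizing F with
  | zero => simp
  | succ n ih =>
    simp only [Function.iterate_succ_apply]
    rw [show pderiv i (c • F) = c • pderiv i F from Derivation.map_smul _ _ _]
    exact ih _

lemma pd_add (α : Fin 3 → ℕ) (F G : MV) : pd α (F + G) = pd α F + pd α G := by
  unfold pd
  rw [iter_pderiv_add, iter_pderiv_add, iter_pderiv_add]

lemma pd_smul (α : Fin 3 → ℕ) (c : ℂ) (F : MV) : pd α (c • F) = c • pd α F := by
  unfold pd
  rw [iter_pderiv_smul, iter_pderiv_smul, iter_pderiv_smul]

lemma pderiv_pderiv (i j : Fin 3) (F : MV) :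
    pderiv i (pderiv j F) = pderiv j (pderiv i F) := by
  induction F using MvPolynomial.induction_on with
  | C a => simp
  | add p q hp hq => simp [hp, hq]
  | mul_X p k ih =>
    have hx : ∀ a b : Fin 3, pderiv a (pderiv b (X k : MV)) = 0 := by
      intro a b
      rcases eq_or_ne k b with rfl | h
      · simp [pderiv_X_self]
      · simp [pderiv_X_of_ne h]
    simp only [pderiv_mul, map_add, pderiv_mul, ih, hx, mul_zero, add_zero]
    ring

lemma iter_pderiv_comm (i j : Fin 3) (n : ℕ) (F : MV) :
    pderiv i ((fun G : MV => pderiv j G)^[n] F) =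
      (fun G : MV => pderiv j G)^[n] (pderiv i F) := by
  induction n generalizing F with
  | zero => simp
  | succ n ih =>
    simp only [Function.iterate_succ_apply']
    rw [pderiv_pderiv, ih]

lemma iter_pderiv_succ (i : Fin 3) (n : ℕ) (F : MV) :
    (fun G : MV => pderiv i G)^[n] (pderiv i F) = (fun G : MV => pderiv i G)^[n + 1] F := by
  rw [Function.iterate_succ_apply]

lemma ordGe_pderiv {m : ℕ} {Q : Fin 3 → ℂ} {F : MV} (h : ordGe (m + 1) Q F) (i : Fin 3) :
    ordGe m Q (pderiv i F) := by
  intro α hα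
  fin_cases i
  · show MvPolynomial.eval Q (pd α (pderiv (0 : Fin 3) F)) = 0
    have key : pd α (pderiv (0 : Fin 3) F) = pd ![α 0 + 1, α 1, α 2] F := by
      unfold pd
      simp only [Matrix.cons_val_zero, Matrix.cons_val_one, Matrix.head_cons,
        Matrix.cons_val_two, Matrix.tail_cons]
      rw [← iter_pderiv_comm (0 : Fin 3) 2 (α 2) F, ← iter_pderiv_comm (0 : Fin 3) 1 (α 1),
        iter_pderiv_succ]
    rw [key]
    apply h
    simp only [Matrix.cons_val_zero, Matrix.cons_val_one, Matrix.head_cons,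
      Matrix.cons_val_two, Matrix.tail_cons]
    omega
  · show MvPolynomial.eval Q (pd α (pderiv (1 : Fin 3) F)) = 0
    have key : pd α (pderiv (1 : Fin 3) F) = pd ![α 0, α 1 + 1, α 2] F := by
      unfold pd
      simp only [Matrix.cons_val_zero, Matrix.cons_val_one, Matrix.head_cons,
        Matrix.cons_val_two, Matrix.tail_cons]
      rw [← iter_pderiv_comm (1 : Fin 3) 2 (α 2) F, iter_pderiv_succ]
    rw [key]
    apply h
    simp only [Matrix.cons_val_zero, Matrix.cons_val_one, Matrix.head_cons,
      Matrix.cons_val_two, Matrix.tail_cons]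
    omega
  · show MvPolynomial.eval Q (pd α (pderiv (2 : Fin 3) F)) = 0
    have key : pd α (pderiv (2 : Fin 3) F) = pd ![α 0, α 1, α 2 + 1] F := by
      unfold pd
      simp only [Matrix.cons_val_zero, Matrix.cons_val_one, Matrix.head_cons,
        Matrix.cons_val_two, Matrix.tail_cons]
      rw [iter_pderiv_succ]
    rw [key]
    apply h
    simp only [Matrix.cons_val_zero, Matrix.cons_val_one, Matrix.head_cons,
      Matrix.cons_val_two, Matrix.tail_cons]
    omega

/-- Directional derivative. -/
noncomputable def DD (A : Fin 3 → ℂ) (F : MV) : MV :=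
  A 0 • pderiv (0 : Fin 3) F + A 1 • pderiv (1 : Fin 3) F + A 2 • pderiv (2 : Fin 3) F

lemma ordGe_DD {m : ℕ} {Q : Fin 3 → ℂ} {F : MV} (h : ordGe (m + 1) Q F) (A : Fin 3 → ℂ) :
    ordGe m Q (DD A F) := by
  intro α hα
  simp only [DD, pd_add, map_add]
  rw [pd_smul, pd_smul, pd_smul]
  simp only [smul_eq_C_mul, map_mul, eval_C]
  rw [ordGe_pderiv h 0 α hα, ordGe_pderiv h 1 α hα, ordGe_pderiv h 2 α hα]
  ring

lemma ordGe_iter_DD {Q : Fin 3 → ℂ} {F : MV} (A : Fin 3 → ℂ) {m : ℕ} (hm : ordGe m Q F) :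
    ∀ k : ℕ, k ≤ m → ordGe (m - k) Q ((fun G : MV => DD A G)^[k] F) := by
  intro k
  induction k with
  | zero => intro _; simpa using hm
  | succ k ih =>
    intro hk
    have h1 := ih (by omega)
    rw [Function.iterate_succ_apply']
    rw [show m - k = (m - (k + 1)) + 1 from by omega] at h1
    exact ordGe_DD h1 A

lemma eval_zero_of_ordGe {n : ℕ} {Q : Fin 3 → ℂ} {G : MV} (hn : 0 < n) (h : ordGe n Q G) :
    MvPolynomial.eval Q G = 0 := by
  have := h (fun _ => 0) (by simpa using hn)
  simpa [pd] using this

/-- Substitution of a line. -/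
noncomputable def gg (A B : Fin 3 → ℂ) : Fin 3 → Polynomial ℂ := fun i =>
  Polynomial.C (B i) + Polynomial.C (A i) * Polynomial.X

lemma DD_add (A : Fin 3 → ℂ) (p q : MV) : DD A (p + q) = DD A p + DD A q := by
  simp only [DD, map_add, smul_add]
  ring

lemma DD_mul_X (A : Fin 3 → ℂ) (p : MV) (k : Fin 3) :
    DD A (p * X k) = DD A p * X k + A k • p := by
  fin_cases k
  · show DD A (p * X 0) = DD A p * X 0 + A 0 • p
    simp only [DD, smul_eq_C_mul, pderiv_mul, pderiv_X_self,
      pderiv_X_of_ne (show (0:Fin 3) ≠ 1 by decide),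
      pderiv_X_of_ne (show (0:Fin 3) ≠ 2 by decide),
      pderiv_X_of_ne (show (1:Fin 3) ≠ 0 by decide),
      pderiv_X_of_ne (show (1:Fin 3) ≠ 2 by decide),
      pderiv_X_of_ne (show (2:Fin 3) ≠ 0 by decide),
      pderiv_X_of_ne (show (2:Fin 3) ≠ 1 by decide),
      mul_zero, mul_one, mul_add, add_zero, zero_add]
    ring
  · show DD A (p * X 1) = DD A p * X 1 + A 1 • p
    simp only [DD, smul_eq_C_mul, pderiv_mul, pderiv_X_self,
      pderiv_X_of_ne (show (0:Fin 3) ≠ 1 by decide),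
      pderiv_X_of_ne (show (0:Fin 3) ≠ 2 by decide),
      pderiv_X_of_ne (show (1:Fin 3) ≠ 0 by decide),
      pderiv_X_of_ne (show (1:Fin 3) ≠ 2 by decide),
      pderiv_X_of_ne (show (2:Fin 3) ≠ 0 by decide),
      pderiv_X_of_ne (show (2:Fin 3) ≠ 1 by decide),
      mul_zero, mul_one, mul_add, add_zero, zero_add]
    ring
  · show DD A (p * X 2) = DD A p * X 2 + A 2 • p
    simp only [DD, smul_eq_C_mul, pderiv_mul, pderiv_X_self,
      pderiv_X_of_ne (show (0:Fin 3) ≠ 1 by decide),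
      pderiv_X_of_ne (show (0:Fin 3) ≠ 2 by decide),
      pderiv_X_of_ne (show (1:Fin 3) ≠ 0 by decide),
      pderiv_X_of_ne (show (1:Fin 3) ≠ 2 by decide),
      pderiv_X_of_ne (show (2:Fin 3) ≠ 0 by decide),
      pderiv_X_of_ne (show (2:Fin 3) ≠ 1 by decide),
      mul_zero, mul_one, mul_add, add_zero, zero_add]
    ring

lemma derivative_aeval (A B : Fin 3 → ℂ) (F : MV) :
    Polynomial.derivative (aeval (gg A B) F) = aeval (gg A B) (DD A F) := by
  induction F using MvPolynomial.induction_on with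
  | C a => simp [DD]
  | add p q hp hq => simp [DD_add, hp, hq]
  | mul_X p k ih =>
    rw [map_mul, aeval_X, Polynomial.derivative_mul, ih, DD_mul_X, map_add, map_mul, aeval_X]
    have h1 : Polynomial.derivative (gg A B k) = Polynomial.C (A k) := by
      simp [gg]
    rw [h1]
    have h2 : aeval (gg A B) (A k • p) = Polynomial.C (A k) * aeval (gg A B) p := by
      rw [smul_eq_C_mul, map_mul, aeval_C]
      simp [Polynomial.algebraMap_eq]
    rw [h2]
    ring

lemma iterate_derivative_aeval (A B : Fin 3 → ℂ) (F : MV) (k : ℕ) :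
    Polynomial.derivative^[k] (aeval (gg A B) F) =
      aeval (gg A B) ((fun G : MV => DD A G)^[k] F) := by
  induction k with
  | zero => rfl
  | succ k ih =>
    rw [Function.iterate_succ_apply', ih, derivative_aeval, Function.iterate_succ_apply']

lemma eval_aeval (A B : Fin 3 → ℂ) (F : MV) (t : ℂ) :
    (aeval (gg A B) F).eval t = MvPolynomial.eval (fun i => B i + A i * t) F := by
  induction F using MvPolynomial.induction_on with
  | C a => simp [Polynomial.algebraMap_eq]
  | add p q hp hq => simp [hp, hq]
  | mul_X p i ih => simp [gg, ih]

lemma support_deg {F : MV} {d : ℕ} (hF : F.IsHomogeneous d) {u : Fin 3 →₀ ℕ}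
    (hu : u ∈ F.support) : u 0 + u 1 + u 2 = d := by
  have h := hF (MvPolynomial.mem_support_iff.mp hu)
  rw [Finsupp.weight_apply, Finsupp.sum_fintype] at h
  · rw [← h, Fin.sum_univ_three]
    simp
  · intro i; simp

lemma natDegree_gg_le (A B : Fin 3 → ℂ) (i : Fin 3) : (gg A B i).natDegree ≤ 1 := by
  apply le_trans (Polynomial.natDegree_add_le _ _)
  simp only [Polynomial.natDegree_C, max_le_iff]
  exact ⟨Nat.zero_le _, le_trans (Polynomial.natDegree_C_mul_le _ _) Polynomial.natDegree_X_le⟩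

lemma natDegree_pow_gg_le (A B : Fin 3 → ℂ) (i : Fin 3) (n : ℕ) :
    ((gg A B i) ^ n).natDegree ≤ n := by
  apply le_trans Polynomial.natDegree_pow_le
  calc n * (gg A B i).natDegree ≤ n * 1 := Nat.mul_le_mul_left n (natDegree_gg_le A B i)
    _ = n := by omega

lemma natDegree_aeval_le {F : MV} {d : ℕ} (hF : F.IsHomogeneous d) (A B : Fin 3 → ℂ) :
    (aeval (gg A B) F).natDegree ≤ d := by
  conv_lhs => rw [F.as_sum]
  rw [map_sum]
  apply Polynomial.natDegree_sum_le_of_forall_le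
  intro u hu
  rw [aeval_monomial, Finsupp.prod_fintype _ _ (fun i => pow_zero _), Fin.prod_univ_three]
  have hd := support_deg hF hu
  have h1 : ((gg A B 0 ^ u 0) * (gg A B 1 ^ u 1) * (gg A B 2 ^ u 2)).natDegree
      ≤ u 0 + u 1 + u 2 := by
    have g01 : ((gg A B 0 ^ u 0) * (gg A B 1 ^ u 1)).natDegree ≤ u 0 + u 1 :=
      le_trans Polynomial.natDegree_mul_le
        (add_le_add (natDegree_pow_gg_le A B 0 (u 0)) (natDegree_pow_gg_le A B 1 (u 1)))
    exact le_trans Polynomial.natDegree_mul_le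
      (add_le_add g01 (natDegree_pow_gg_le A B 2 (u 2)))
  refine le_trans Polynomial.natDegree_mul_le ?_
  rw [Polynomial.algebraMap_eq, Polynomial.natDegree_C]
  omega

lemma coeff_aeval_eq {F : MV} {d : ℕ} (hF : F.IsHomogeneous d) (A B : Fin 3 → ℂ) :
    (aeval (gg A B) F).coeff d = MvPolynomial.eval A F := by
  conv_lhs => rw [F.as_sum]
  rw [map_sum, Polynomial.finset_sum_coeff, eval_eq']
  apply Finset.sum_congr rfl
  intro u hu
  have hd := support_deg hF hu
  rw [aeval_monomial, Finsupp.prod_fintype _ _ (fun i => pow_zero _), Fin.prod_univ_three,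
    Polynomial.algebraMap_eq, Fin.prod_univ_three]
  have e0 : ∀ i : Fin 3, ((gg A B i) ^ (u i)).coeff (u i) = (A i) ^ (u i) := by
    intro i
    have h2 := Polynomial.coeff_pow_of_natDegree_le (p := gg A B i) (n := 1) (m := u i)
      (natDegree_gg_le A B i)
    rw [mul_one] at h2
    rw [h2]
    have h3 : (gg A B i).coeff 1 = A i := by
      simp [gg]
    rw [h3]
  have hprod : ((gg A B 0 ^ u 0) * (gg A B 1 ^ u 1) * (gg A B 2 ^ u 2)).coeff (u 0 + u 1 + u 2)
      = A 0 ^ u 0 * A 1 ^ u 1 * A 2 ^ u 2 := by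
    rw [Polynomial.coeff_mul_add_eq_of_natDegree_le
        (le_trans Polynomial.natDegree_mul_le
          (add_le_add (natDegree_pow_gg_le A B 0 (u 0)) (natDegree_pow_gg_le A B 1 (u 1))))
        (natDegree_pow_gg_le A B 2 (u 2)),
      Polynomial.coeff_mul_add_eq_of_natDegree_le (natDegree_pow_gg_le A B 0 (u 0))
        (natDegree_pow_gg_le A B 1 (u 1)), e0 0, e0 1, e0 2]
  rw [Polynomial.coeff_C_mul, ← hd, hprod]

lemma taylor_coeff_zero {d : ℕ} {Q : Fin 3 → ℂ} {F : MV} (hQ : ordGe d Q F)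
    (Xv : Fin 3 → ℂ) {k : ℕ} (hk : k < d) : (aeval (gg Xv Q) F).coeff k = 0 := by
  have hco := Polynomial.coeff_iterate_derivative (k := k) (aeval (gg Xv Q) F) 0
  have hev : (Polynomial.derivative^[k] (aeval (gg Xv Q) F)).coeff 0 = 0 := by
    rw [Polynomial.coeff_zero_eq_eval_zero, iterate_derivative_aeval, eval_aeval]
    rw [show (fun i => Q i + Xv i * 0) = Q from by funext i; ring]
    exact eval_zero_of_ordGe (show 0 < d - k by omega) (ordGe_iter_DD Xv hQ k (by omega))
  rw [hev, zero_add, Nat.descFactorial_self] at hco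
  have hk1 : ((k.factorial : ℂ)) ≠ 0 := Nat.cast_ne_zero.mpr (Nat.factorial_ne_zero k)
  have h2 : (k.factorial : ℂ) * (aeval (gg Xv Q) F).coeff k = 0 := by
    rw [← nsmul_eq_mul]
    exact hco.symm
  exact (mul_eq_zero.mp h2).resolve_left hk1

lemma taylor_eval {d : ℕ} {Q : Fin 3 → ℂ} {F : MV} (hF : F.IsHomogeneous d) (hQ : ordGe d Q F)
    (Xv : Fin 3 → ℂ) (s : ℂ) :
    MvPolynomial.eval (fun i => Q i + Xv i * s) F = s ^ d * MvPolynomial.eval Xv F := by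
  have hp : aeval (gg Xv Q) F = Polynomial.C (MvPolynomial.eval Xv F) * Polynomial.X ^ d := by
    ext n
    rw [Polynomial.coeff_C_mul, Polynomial.coeff_X_pow]
    rcases lt_trichotomy n d with h | rfl | h
    · rw [taylor_coeff_zero hQ Xv h, if_neg (by omega), mul_zero]
    · rw [coeff_aeval_eq hF, if_pos rfl, mul_one]
    · rw [Polynomial.coeff_eq_zero_of_natDegree_lt
        (lt_of_le_of_lt (natDegree_aeval_le hF Xv Q) h), if_neg (by omega), mul_zero]
  have he := eval_aeval Xv Q F s
  rw [hp] at he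
  simp only [Polynomial.eval_mul, Polynomial.eval_C, Polynomial.eval_pow,
    Polynomial.eval_X] at he
  rw [← he]
  ring

lemma eval_smul_hom {F : MV} {d : ℕ} (hF : F.IsHomogeneous d) (c : ℂ) (x : Fin 3 → ℂ) :
    MvPolynomial.eval (c • x) F = c ^ d * MvPolynomial.eval x F := by
  rw [eval_eq', eval_eq', Finset.mul_sum]
  apply Finset.sum_congr rfl
  intro u hu
  have hd := support_deg hF hu
  rw [Fin.prod_univ_three, Fin.prod_univ_three]
  simp only [Pi.smul_apply, smul_eq_mul]
  rw [← hd, mul_pow, mul_pow, mul_pow, pow_add, pow_add]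
  ring

lemma translate_inv {d : ℕ} {Q : Fin 3 → ℂ} {F : MV} (hF : F.IsHomogeneous d) (hQ : ordGe d Q F)
    (a : ℂ) (Y : Fin 3 → ℂ) :
    MvPolynomial.eval (a • Q + Y) F = MvPolynomial.eval Y F := by
  rcases eq_or_ne a 0 with rfl | ha
  · simp
  · have h1 : (a • Q + Y : Fin 3 → ℂ) = a • (fun i => Q i + Y i * a⁻¹) := by
      funext i
      simp only [Pi.add_apply, Pi.smul_apply, smul_eq_mul]
      field_simp
    rw [h1, eval_smul_hom hF, taylor_eval hF hQ, ← mul_assoc, ← mul_pow,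
      mul_inv_cancel₀ ha, one_pow, one_mul]

end SecantAux

/-- If there is a nonzero homogeneous polynomial of degree `d` vanishing at `d + 1`
pairwise non-proportional nonzero points and to order at least `d` at a nonzero point `Q`,
then `Q` lies in the linear span of two of the points. -/
theorem degeneracy_implies_on_secant (d : ℕ) (hd : 1 ≤ d)
    (P : Fin (d + 1) → (Fin 3 → ℂ)) (hP0 : ∀ i, P i ≠ 0)
    (hprop : ∀ i j, i ≠ j → ∀ c : ℂ, P i ≠ c • P j)
    (Q : Fin 3 → ℂ) (hQ : Q ≠ 0)
    (F : MvPolynomial (Fin 3) ℂ) (hF0 : F ≠ 0) (hF : F.IsHomogeneous d)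
    (hFZ : ∀ i, MvPolynomial.eval (P i) F = 0) (hFQ : ordGe d Q F) :
    ∃ i j, i ≠ j ∧ Q ∈ Submodule.span ℂ {P i, P j} := by
  classical
  have h01 : (0 : Fin (d + 1)) ≠ 1 := by
    intro h
    have h2 := congrArg Fin.val h
    have h4 : ((1 : Fin (d + 1)) : ℕ) = 1 % (d + 1) := rfl
    rw [show ((0 : Fin (d + 1)) : ℕ) = 0 from rfl, h4, Nat.mod_eq_of_lt (by omega)] at h2
    exact absurd h2 (by omega)
  by_cases hmul : ∃ i, ∃ c : ℂ, P i = c • Q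
  · obtain ⟨i, c, hic⟩ := hmul
    have hc0 : c ≠ 0 := by
      rintro rfl
      exact hP0 i (by simpa using hic)
    obtain ⟨j, hij⟩ : ∃ j, i ≠ j := by
      rcases eq_or_ne i 0 with rfl | h
      · exact ⟨1, h01⟩
      · exact ⟨0, h⟩
    refine ⟨i, j, hij, ?_⟩
    rw [Submodule.mem_span_pair]
    exact ⟨c⁻¹, 0, by
      rw [hic, smul_smul, inv_mul_cancel₀ hc0, one_smul, zero_smul, add_zero]⟩
  push_neg at hmul
  by_contra hcon
  push_neg at hcon
  have li : LinearIndependent ℂ ![Q, P 0, P 1] := by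
    rw [Fintype.linearIndependent_iff]
    intro g hg
    rw [Fin.sum_univ_three] at hg
    simp only [Matrix.cons_val_zero, Matrix.cons_val_one, Matrix.head_cons,
      Matrix.cons_val_two, Matrix.tail_cons] at hg
    have hg0 : g 0 = 0 := by
      by_contra h0
      apply hcon 0 1 h01
      rw [Submodule.mem_span_pair]
      refine ⟨-(g 1) / g 0, -(g 2) / g 0, ?_⟩
      funext k
      have hk := congrFun hg k
      simp only [Pi.add_apply, Pi.smul_apply, smul_eq_mul, Pi.zero_apply] at hk
      simp only [Pi.add_apply, Pi.smul_apply, smul_eq_mul]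
      field_simp
      linear_combination -hk
    have hg12 : g 1 • P 0 + g 2 • P 1 = 0 := by
      rw [hg0, zero_smul, zero_add] at hg
      exact hg
    have hg2 : g 2 = 0 := by
      by_contra h2
      apply hprop 1 0 (Ne.symm h01) (-(g 1) / g 2)
      funext k
      have hk := congrFun hg12 k
      simp only [Pi.add_apply, Pi.smul_apply, smul_eq_mul, Pi.zero_apply] at hk
      simp only [Pi.smul_apply, smul_eq_mul]
      field_simp
      linear_combination hk
    have hg1 : g 1 = 0 := by
      rw [hg2, zero_smul, add_zero] at hg12
      rcases smul_eq_zero.mp hg12 with h | h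
      · exact h
      · exact absurd h (hP0 0)
    intro i
    fin_cases i
    · exact hg0
    · exact hg1
    · exact hg2
  have hcard : Fintype.card (Fin 3) = Module.finrank ℂ (Fin 3 → ℂ) := by
    simp [Module.finrank_fin_fun]
  let B := basisOfLinearIndependentOfCardEqFinrank li hcard
  have hB : ⇑B = ![Q, P 0, P 1] := coe_basisOfLinearIndependentOfCardEqFinrank li hcard
  have hB0 : B 0 = Q := by rw [hB]; rfl
  have hB1 : B 1 = P 0 := by rw [hB]; rfl
  have hB2 : B 2 = P 1 := by rw [hB]; rfl
  have hrep : ∀ v : Fin 3 → ℂ,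
      (B.repr v 0) • Q + (B.repr v 1) • P 0 + (B.repr v 2) • P 1 = v := by
    intro v
    have h := B.sum_repr v
    rw [Fin.sum_univ_three, hB0, hB1, hB2] at h
    exact h
  set a : Fin (d + 1) → ℂ := fun i => B.repr (P i) 0 with ha
  set b : Fin (d + 1) → ℂ := fun i => B.repr (P i) 1 with hb
  set c : Fin (d + 1) → ℂ := fun i => B.repr (P i) 2 with hc
  have hrepP : ∀ i, a i • Q + b i • P 0 + c i • P 1 = P i := fun i => hrep (P i)
  have hco : ∀ i : Fin (d + 1), i ≠ 0 → c i ≠ 0 := by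
    intro i hi hci
    have h1 : a i • Q + b i • P 0 = P i := by
      have h2 := hrepP i
      rw [hci, zero_smul, add_zero] at h2
      exact h2
    rcases eq_or_ne (a i) 0 with hai | hai
    · apply hprop i 0 hi (b i)
      rw [hai, zero_smul, zero_add] at h1
      exact h1.symm
    · apply hcon i 0 hi
      rw [Submodule.mem_span_pair]
      refine ⟨(a i)⁻¹, -((a i)⁻¹ * b i), ?_⟩
      funext k
      have hk := congrFun h1 k
      simp only [Pi.add_apply, Pi.smul_apply, smul_eq_mul] at hk
      simp only [Pi.add_apply, Pi.smul_apply, smul_eq_mul]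
      field_simp
      linear_combination -hk
  set f : Polynomial ℂ := aeval (SecantAux.gg (P 0) (P 1)) F with hfdef
  have hfd : f.natDegree ≤ d := SecantAux.natDegree_aeval_le hF (P 0) (P 1)
  have hftop : f.coeff d = 0 := by
    rw [hfdef, SecantAux.coeff_aeval_eq hF]
    exact hFZ 0
  have hplane : ∀ i, MvPolynomial.eval (b i • P 0 + c i • P 1) F = 0 := by
    intro i
    have h1 := SecantAux.translate_inv hF hFQ (a i) (b i • P 0 + c i • P 1)
    rw [show a i • Q + (b i • P 0 + c i • P 1) = P i from by
      rw [← add_assoc]; exact hrepP i] at h1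
    rw [← h1]
    exact hFZ i
  have hscale : ∀ β γ : ℂ, γ ≠ 0 →
      MvPolynomial.eval (β • P 0 + γ • P 1) F = γ ^ d * f.eval (β / γ) := by
    intro β γ hγ
    have h1 : (β • P 0 + γ • P 1 : Fin 3 → ℂ) = γ • (fun k => P 1 k + P 0 k * (β / γ)) := by
      funext k
      simp only [Pi.add_apply, Pi.smul_apply, smul_eq_mul]
      field_simp
      ring
    rw [h1, SecantAux.eval_smul_hom hF, hfdef, SecantAux.eval_aeval]
  have hroot : ∀ i : Fin (d + 1), i ≠ 0 → f.eval (b i / c i) = 0 := by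
    intro i hi
    have h1 := hscale (b i) (c i) (hco i hi)
    rw [hplane i] at h1
    exact (mul_eq_zero.mp h1.symm).resolve_left (pow_ne_zero d (hco i hi))
  have hf0 : f = 0 := by
    by_contra hf
    have hnd : f.natDegree < d := by
      rcases lt_or_eq_of_le hfd with h | h
      · exact h
      · exact absurd (Polynomial.leadingCoeff_eq_zero.mp
          (by rw [Polynomial.leadingCoeff, h]; exact hftop)) hf
    have hinj : Set.InjOn (fun i => b i / c i) ↑(Finset.univ.erase (0 : Fin (d + 1))) := by
      intro i hi j hj hij2
      by_contra hne
      have hi0 : i ≠ 0 := (Finset.mem_erase.mp (by exact_mod_cast hi)).1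
      have hj0 : j ≠ 0 := (Finset.mem_erase.mp (by exact_mod_cast hj)).1
      have hci := hco i hi0
      have hcj := hco j hj0
      have hbc : b i * c j = b j * c i := (div_eq_div_iff hci hcj).mp hij2
      have hvec : c j • P i - c i • P j = (c j * a i - c i * a j) • Q := by
        rw [← hrepP i, ← hrepP j]
        funext k
        simp only [Pi.add_apply, Pi.sub_apply, Pi.smul_apply, smul_eq_mul]
        linear_combination (P 0 k) * hbc
      rcases eq_or_ne (c j * a i - c i * a j) 0 with hk0 | hk0
      · rw [hk0, zero_smul, sub_eq_zero] at hvec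
        apply hprop i j hne ((c j)⁻¹ * c i)
        funext k
        have hk := congrFun hvec k
        simp only [Pi.smul_apply, smul_eq_mul] at hk
        simp only [Pi.smul_apply, smul_eq_mul]
        field_simp
        linear_combination hk
      · apply hcon i j hne
        rw [Submodule.mem_span_pair]
        refine ⟨(c j * a i - c i * a j)⁻¹ * c j, -((c j * a i - c i * a j)⁻¹ * c i), ?_⟩
        funext k
        have hk := congrFun hvec k
        simp only [Pi.sub_apply, Pi.smul_apply, smul_eq_mul] at hk
        simp only [Pi.add_apply, Pi.smul_apply, smul_eq_mul]
        rw [show ((c j * a i - c i * a j)⁻¹ * c j) * P i k +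
            -((c j * a i - c i * a j)⁻¹ * c i) * P j k =
            (c j * a i - c i * a j)⁻¹ * (c j * P i k - c i * P j k) from by ring, hk]
        rw [inv_mul_cancel_left₀ hk0]
    have hcardS : ((Finset.univ.erase (0 : Fin (d + 1))).image (fun i => b i / c i)).card
        = d := by
      rw [Finset.card_image_of_injOn hinj, Finset.card_erase_of_mem (Finset.mem_univ _),
        Finset.card_univ, Fintype.card_fin]
      omega
    have hsub : ((Finset.univ.erase (0 : Fin (d + 1))).image (fun i => b i / c i))
        ⊆ f.roots.toFinset := by
      intro x hx
      obtain ⟨i, hi, rfl⟩ := Finset.mem_image.mp hx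
      rw [Multiset.mem_toFinset, Polynomial.mem_roots']
      exact ⟨hf, hroot i (Finset.mem_erase.mp hi).1⟩
    have h1 := Finset.card_le_card hsub
    have h2 := Multiset.toFinset_card_le f.roots
    have h3 := Polynomial.card_roots' f
    omega
  have hvan : ∀ v : Fin 3 → ℂ, B.repr v 2 ≠ 0 → MvPolynomial.eval v F = 0 := by
    intro v hv
    have h1 := SecantAux.translate_inv hF hFQ (B.repr v 0)
      (B.repr v 1 • P 0 + B.repr v 2 • P 1)
    rw [show B.repr v 0 • Q + (B.repr v 1 • P 0 + B.repr v 2 • P 1) = v from by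
      rw [← add_assoc]; exact hrep v] at h1
    rw [h1, hscale _ _ hv, hf0, Polynomial.eval_zero, mul_zero]
  set L : MvPolynomial (Fin 3) ℂ :=
    C (B.repr ((Pi.single (0 : Fin 3) (1 : ℂ) : Fin 3 → ℂ)) 2) * X 0 +
      C (B.repr ((Pi.single (1 : Fin 3) (1 : ℂ) : Fin 3 → ℂ)) 2) * X 1 +
      C (B.repr ((Pi.single (2 : Fin 3) (1 : ℂ) : Fin 3 → ℂ)) 2) * X 2 with hL
  have hLeval : ∀ v : Fin 3 → ℂ, MvPolynomial.eval v L = B.repr v 2 := by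
    intro v
    have hv : v = v 0 • (Pi.single (0 : Fin 3) (1 : ℂ) : Fin 3 → ℂ) + v 1 • (Pi.single (1 : Fin 3) (1 : ℂ) : Fin 3 → ℂ) +
        v 2 • (Pi.single (2 : Fin 3) (1 : ℂ) : Fin 3 → ℂ) := by
      funext k
      fin_cases k <;> simp [Pi.single_apply]
    rw [hL]
    simp only [map_add, map_mul, eval_C, eval_X]
    conv_rhs => rw [hv]
    rw [map_add, map_add, map_smul, map_smul, map_smul]
    simp only [Finsupp.coe_add, Finsupp.coe_smul, Pi.add_apply, Pi.smul_apply, smul_eq_mul]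
    ring
  have hL0 : L ≠ 0 := by
    intro h
    have h1 := hLeval (P 1)
    rw [h, map_zero, ← hB2, Module.Basis.repr_self] at h1
    simp [Finsupp.single_eq_same] at h1
  have hFL : F * L = 0 := by
    apply MvPolynomial.funext
    intro v
    rw [map_mul, map_zero, hLeval]
    rcases eq_or_ne (B.repr v 2) 0 with h | h
    · rw [h, mul_zero]
    · rw [hvan v h, zero_mul]
  rcases mul_eq_zero.mp hFL with h | h
  · exact hF0 h
  · exact hL0 h
end
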